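/- For integers 0 < j < m and an integer l ≥ 3, the function θ_l(r) = (r²(j+γ_l) − j)/(r²(1−r²)), with γ_l = (l−2)(m−j+l−1), is strictly increasing on the interval (0,1). -/
import Mathlib


theorem stmt_9 (j m l : ℕ) (hj : 0 < j) (hm : j < m) (hl : 3 ≤ l)
    (γ : ℝ) (hγ : γ = ((l : ℝ) - 2) * ((m : ℝ) - j + l - 1)) :
    StrictMonoOn (fun r : ℝ => (r ^ 2 * ((j : ℝ) + γ) - j) / (r ^ 2 * (1 - r ^ 2)))
      (Set.Ioo (0 : ℝ) 1) := by
  have hγ0 : 0 ≤ γ := by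
    have h1 : (3:ℝ) ≤ (l:ℝ) := by exact_mod_cast hl
    have h2 : (j:ℝ) < (m:ℝ) := by exact_mod_cast hm
    rw [hγ]; nlinarith
  have hj' : (1:ℝ) ≤ (j:ℝ) := by exact_mod_cast hj
  intro a ha b hb hab
  obtain ⟨ha1, ha2⟩ := ha
  obtain ⟨hb1, hb2⟩ := hb
  simp only
  have hda : 0 < a^2*(1-a^2) := mul_pos (by positivity) (by nlinarith)
  have hdb : 0 < b^2*(1-b^2) := mul_pos (by positivity) (by nlinarith)
  rw [div_lt_div_iff₀ hda hdb]
  have key : 0 < (b^2 - a^2) * (γ*a^2*b^2 + (j:ℝ)*(1-a^2)*(1-b^2)) := by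
    apply mul_pos (by nlinarith)
    have h1 : 0 ≤ γ*a^2*b^2 := by positivity
    have h2 : 0 < (j:ℝ)*(1-a^2)*(1-b^2) := by
      apply mul_pos (mul_pos (by linarith) (by nlinarith)) (by nlinarith)
    linarith
  nlinarith [key]
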